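/- On the ring 𝒟⁻ of pseudo-differential operators over a commutative differential ring (𝒜, D), viewed as a Lie algebra under the commutator [X,Y] = XY − YX, the linear map R(X) = X₊ − X₋ satisfies the modified Yang–Baxter equation: [R(X),R(Y)] − R([R(X),Y] + [X,R(Y)]) = −[X,Y] for all X, Y ∈ 𝒟⁻. Consequently [X,Y]_R := [R(X),Y] + [X,R(Y)] is a second Lie bracket on 𝒟⁻. -/

import Mathlib

/-!
Pseudo-differential operators of the first type `𝒟⁻` over a commutative
differential ring `(𝒜, D)`.  An operator `A = Σ_{i ∈ ℤ} f_i D^i` (with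
`f_i = 0` for all sufficiently large `i`) is encoded by its coefficient
function `f : ℤ → 𝒜`.  Multiplication is determined by
`(f D^i)·(g D^j) = Σ_{r ≥ 0} binom(i,r) f D^r(g) D^{i+j-r}`.
-/

namespace TwoBKP

/-- The generalized binomial coefficient `binom(i,r) = i(i−1)⋯(i−r+1)/r! ∈ ℤ`
for an integer upper index `i` and `r : ℕ`. -/
noncomputable def zchoose (i : ℤ) (r : ℕ) : ℤ := Ring.choose i r

variable {A : Type*} [CommRing A]

/-- `f : ℤ → 𝒜` represents an element of `𝒟⁻` iff its support is bounded above. -/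
def IsPDO (f : ℤ → A) : Prop := ∃ N : ℤ, ∀ i : ℤ, N < i → f i = 0

/-- The product in `𝒟⁻`, coefficientwise: the coefficient of `D^n` in `A·B` is
`Σ_{i+j-r=n, r≥0} binom(i,r) f_i D^r(g_j)`. -/
noncomputable def pmul (D : A → A) (f g : ℤ → A) : ℤ → A := fun n =>
  ∑ᶠ p : ℤ × ℤ,
    if 0 ≤ p.1 + p.2 - n then
      zchoose p.1 (p.1 + p.2 - n).toNat • (f p.1 * D^[(p.1 + p.2 - n).toNat] (g p.2))
    else 0

/-- The unit `1 = 1·D⁰` of `𝒟⁻`. -/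
def pone : ℤ → A := fun n => if n = 0 then (1 : A) else 0

/-- The monomial `D^k` (in particular `pD 1 = D` and `pD (-1) = D⁻¹`). -/
def pD (k : ℤ) : ℤ → A := fun n => if n = k then (1 : A) else 0

/-- The multiplication operator `a·D⁰` attached to `a ∈ 𝒜`. -/
def sc (a : A) : ℤ → A := fun n => if n = 0 then a else 0

/-- The nonnegative (differential-operator) part `A₊ = Σ_{i≥0} f_i D^i`. -/
def posPart (f : ℤ → A) : ℤ → A := fun n => if 0 ≤ n then f n else 0

/-- The negative part `A₋ = Σ_{i<0} f_i D^i`. -/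
def negPart (f : ℤ → A) : ℤ → A := fun n => if n < 0 then f n else 0

/-- The residue `res A = f_{-1}`. -/
def res (f : ℤ → A) : A := f (-1)

/-- The adjoint `A* = Σ_i (−D)^i ∘ f_i` computed in `𝒟⁻`, coefficientwise:
the coefficient of `D^n` in `A*` is `Σ_{i ≥ n} (−1)^i binom(i, i−n) D^{i−n}(f_i)`. -/
noncomputable def adj (D : A → A) (f : ℤ → A) : ℤ → A := fun n =>
  ∑ᶠ i : ℤ,
    if 0 ≤ i - n then
      ((-1 : ℤ) ^ i.natAbs * zchoose i (i - n).toNat) • D^[(i - n).toNat] (f i)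
    else 0

/-- Powers in `𝒟⁻`. -/
noncomputable def ppow (D : A → A) (f : ℤ → A) : ℕ → ℤ → A
  | 0 => pone
  | k + 1 => pmul D f (ppow D f k)

/-- The action of a differential operator `Σ_{i≥0} f_i D^i` on an element of `𝒜`. -/
noncomputable def papply (D : A → A) (f : ℤ → A) (a : A) : A :=
  ∑ᶠ i : ℤ, if 0 ≤ i then f i * D^[i.toNat] a else 0

/-- Conjugation by `D`:  `A ↦ D·A·D⁻¹`. -/
noncomputable def conjD (D : A → A) (f : ℤ → A) : ℤ → A :=
  pmul D (pD 1) (pmul D f (pD (-1)))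

end TwoBKP

/-!
STATEMENT 18.  On `𝒟⁻`, viewed as a Lie algebra under the commutator, the map
`R(X) = X₊ − X₋` satisfies the modified Yang–Baxter equation
`[R X, R Y] − R([R X, Y] + [X, R Y]) = −[X, Y]`; consequently
`[X,Y]_R := [R X, Y] + [X, R Y]` is a second Lie bracket on `𝒟⁻`.
-/

namespace TwoBKP

variable {A : Type*} [CommRing A]

/-- The standard `R`-matrix `R(X) = X₊ − X₋` on `𝒟⁻`. -/
def rMat (f : ℤ → A) : ℤ → A := posPart f - negPart f

/-- The commutator bracket on `𝒟⁻`. -/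
noncomputable def brk (D : A → A) (f g : ℤ → A) : ℤ → A := pmul D f g - pmul D g f

/-- The `R`-bracket `[X,Y]_R = [R X, Y] + [X, R Y]` on `𝒟⁻`. -/
noncomputable def brkR (D : A → A) (f g : ℤ → A) : ℤ → A :=
  brk D (rMat f) g + brk D f (rMat g)

end TwoBKP

namespace TwoBKPAux
open TwoBKP Finset

variable {A : Type*} [CommRing A] (D : Derivation ℤ A A)

lemma zchoose_nonneg_lt {i : ℤ} {r : ℕ} (h0 : 0 ≤ i) (h : i < (r : ℤ)) : zchoose i r = 0 := by
  obtain ⟨m, rfl⟩ := Int.eq_ofNat_of_zero_le h0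
  rw [zchoose, Ring.choose_natCast]
  exact_mod_cast congrArg (Nat.cast (R := ℤ)) (Nat.choose_eq_zero_of_lt (by exact_mod_cast h))

lemma itD_zero (r : ℕ) : (⇑D)^[r] (0 : A) = 0 := by
  induction r with
  | zero => rfl
  | succ r ih => rw [Function.iterate_succ_apply', ih, map_zero]

lemma itD_add (r : ℕ) (a b : A) : (⇑D)^[r] (a + b) = (⇑D)^[r] a + (⇑D)^[r] b := by
  induction r generalizing a b with
  | zero => rfl
  | succ r ih => rw [Function.iterate_succ_apply', ih, map_add,
      Function.iterate_succ_apply', Function.iterate_succ_apply']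

lemma itD_neg (r : ℕ) (a : A) : (⇑D)^[r] (-a) = -(⇑D)^[r] a := by
  induction r generalizing a with
  | zero => rfl
  | succ r ih => rw [Function.iterate_succ_apply', ih, map_neg,
      Function.iterate_succ_apply']

/-- `D^[r]` as an additive monoid hom. -/
noncomputable def itDHom (r : ℕ) : A →+ A := AddMonoidHom.mk' ((⇑D)^[r]) (itD_add D r)

lemma itD_sum {ι : Type*} (r : ℕ) (s : Finset ι) (F : ι → A) :
    (⇑D)^[r] (∑ x ∈ s, F x) = ∑ x ∈ s, (⇑D)^[r] (F x) :=
  map_sum (itDHom D r) F s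

lemma itD_leibniz (r : ℕ) (a b : A) :
    (⇑D)^[r] (a * b) =
      ∑ ij ∈ antidiagonal r, (r.choose ij.1) • ((⇑D)^[ij.1] a * (⇑D)^[ij.2] b) := by
  induction r with
  | zero => simp
  | succ n ih =>
    rw [Finset.sum_antidiagonal_choose_succ_nsmul (fun i j => (⇑D)^[i] a * (⇑D)^[j] b) n]
    simp only [Function.iterate_succ_apply', ih, map_sum, map_nsmul, Derivation.leibniz,
      smul_eq_mul, smul_add, sum_add_distrib]
    congr 1
    refine sum_congr rfl fun ⟨i, j⟩ hij ↦ ?_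
    rw [n.choose_symm_of_eq_add (Finset.HasAntidiagonal.mem_antidiagonal.1 hij).symm, mul_comm]

lemma itD_leibniz' (r : ℕ) (a b : A) :
    (⇑D)^[r] (a * b) =
      ∑ s ∈ range (r + 1), (r.choose s) • ((⇑D)^[s] a * (⇑D)^[r - s] b) := by
  rw [itD_leibniz D r a b]
  exact Finset.Nat.sum_antidiagonal_eq_sum_range_succ
    (fun i j => r.choose i • ((⇑D)^[i] a * (⇑D)^[j] b)) r



/-- The summand of `pmul`. -/
noncomputable def T (D : A → A) (f g : ℤ → A) (n : ℤ) (p : ℤ × ℤ) : A :=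
  if 0 ≤ p.1 + p.2 - n then
    zchoose p.1 (p.1 + p.2 - n).toNat • (f p.1 * D^[(p.1 + p.2 - n).toNat] (g p.2))
  else 0

lemma pmul_def (f g : ℤ → A) (n : ℤ) : pmul (⇑D) f g n = ∑ᶠ p : ℤ × ℤ, T (⇑D) f g n p := rfl

lemma T_zero_left {f g : ℤ → A} {n : ℤ} {p : ℤ × ℤ} (h : f p.1 = 0) : T (⇑D) f g n p = 0 := by
  simp [T, h]

lemma T_zero_right {f g : ℤ → A} {n : ℤ} {p : ℤ × ℤ} (h : g p.2 = 0) : T (⇑D) f g n p = 0 := by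
  simp [T, h, itD_zero]

lemma T_support {f g : ℤ → A} {n : ℤ} {p : ℤ × ℤ} (h : T (⇑D) f g n p ≠ 0) :
    f p.1 ≠ 0 ∧ g p.2 ≠ 0 ∧ n ≤ p.1 + p.2 := by
  refine ⟨fun hf => h (T_zero_left D hf), fun hg => h (T_zero_right D hg), ?_⟩
  by_contra hn
  exact h (if_neg (by omega))

lemma pmul_eq_sum {f g : ℤ → A} {n : ℤ} {S : Finset (ℤ × ℤ)}
    (hS : ∀ p : ℤ × ℤ, f p.1 ≠ 0 → g p.2 ≠ 0 → n ≤ p.1 + p.2 → p ∈ S) :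
    pmul (⇑D) f g n = ∑ p ∈ S, T (⇑D) f g n p := by
  rw [pmul_def]
  apply finsum_eq_sum_of_support_subset
  intro p hp
  simp only [Function.mem_support] at hp
  obtain ⟨h1, h2, h3⟩ := T_support D hp
  exact hS p h1 h2 h3

lemma pmul_eq_sum_Icc {f g : ℤ → A} {Nf Ng n : ℤ}
    (hf : ∀ i, Nf < i → f i = 0) (hg : ∀ i, Ng < i → g i = 0) :
    pmul (⇑D) f g n = ∑ p ∈ Icc (n - Ng) Nf ×ˢ Icc (n - Nf) Ng, T (⇑D) f g n p := by
  apply pmul_eq_sum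
  intro p h1 h2 h3
  have b1 : p.1 ≤ Nf := by by_contra hb; exact h1 (hf _ (by omega))
  have b2 : p.2 ≤ Ng := by by_contra hb; exact h2 (hg _ (by omega))
  simp only [mem_product, mem_Icc]
  omega

lemma pmul_bound {f g : ℤ → A} {Nf Ng : ℤ}
    (hf : ∀ i, Nf < i → f i = 0) (hg : ∀ i, Ng < i → g i = 0) :
    ∀ n, Nf + Ng < n → pmul (⇑D) f g n = 0 := by
  intro n hn
  rw [pmul_eq_sum D (S := ∅) (fun p h1 h2 h3 => ?_), Finset.sum_empty]
  have b1 : p.1 ≤ Nf := by by_contra hb; exact h1 (hf _ (by omega))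
  have b2 : p.2 ≤ Ng := by by_contra hb; exact h2 (hg _ (by omega))
  omega

lemma pmul_pos_supp {f g : ℤ → A}
    (hf : ∀ i, i < 0 → f i = 0) (hg : ∀ i, i < 0 → g i = 0) :
    ∀ n, n < 0 → pmul (⇑D) f g n = 0 := by
  intro n hn
  rw [pmul_def]
  apply finsum_eq_zero_of_forall_eq_zero
  intro p
  by_contra hp
  obtain ⟨h1, h2, h3⟩ := T_support D hp
  have b1 : 0 ≤ p.1 := by by_contra hb; exact h1 (hf _ (by omega))
  have b2 : 0 ≤ p.2 := by by_contra hb; exact h2 (hg _ (by omega))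
  apply hp
  unfold T
  rw [if_pos (by omega), zchoose_nonneg_lt b1 (by omega), zero_smul]

lemma pmul_neg_supp {f g : ℤ → A}
    (hf : ∀ i, 0 ≤ i → f i = 0) (hg : ∀ i, 0 ≤ i → g i = 0) :
    ∀ n, 0 ≤ n → pmul (⇑D) f g n = 0 := by
  intro n hn
  rw [pmul_def]
  apply finsum_eq_zero_of_forall_eq_zero
  intro p
  by_contra hp
  obtain ⟨h1, h2, h3⟩ := T_support D hp
  have b1 : p.1 < 0 := by by_contra hb; exact h1 (hf _ (by omega))
  have b2 : p.2 < 0 := by by_contra hb; exact h2 (hg _ (by omega))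
  omega

lemma pmul_add_left {f₁ f₂ g : ℤ → A} {Nf Ng : ℤ}
    (hf₁ : ∀ i, Nf < i → f₁ i = 0) (hf₂ : ∀ i, Nf < i → f₂ i = 0)
    (hg : ∀ i, Ng < i → g i = 0) :
    pmul (⇑D) (f₁ + f₂) g = pmul (⇑D) f₁ g + pmul (⇑D) f₂ g := by
  funext n
  have hf : ∀ i, Nf < i → (f₁ + f₂) i = 0 := fun i hi => by
    simp [hf₁ i hi, hf₂ i hi]
  rw [Pi.add_apply, pmul_eq_sum_Icc D hf hg, pmul_eq_sum_Icc D hf₁ hg,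
    pmul_eq_sum_Icc D hf₂ hg, ← Finset.sum_add_distrib]
  refine sum_congr rfl fun p _ => ?_
  unfold T
  split
  · rw [Pi.add_apply, add_mul, smul_add]
  · rw [add_zero]

lemma pmul_add_right {f g₁ g₂ : ℤ → A} {Nf Ng : ℤ}
    (hf : ∀ i, Nf < i → f i = 0) (hg₁ : ∀ i, Ng < i → g₁ i = 0)
    (hg₂ : ∀ i, Ng < i → g₂ i = 0) :
    pmul (⇑D) f (g₁ + g₂) = pmul (⇑D) f g₁ + pmul (⇑D) f g₂ := by
  funext n
  have hg : ∀ i, Ng < i → (g₁ + g₂) i = 0 := fun i hi => by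
    simp [hg₁ i hi, hg₂ i hi]
  rw [Pi.add_apply, pmul_eq_sum_Icc D hf hg, pmul_eq_sum_Icc D hf hg₁,
    pmul_eq_sum_Icc D hf hg₂, ← Finset.sum_add_distrib]
  refine sum_congr rfl fun p _ => ?_
  unfold T
  split
  · rw [Pi.add_apply, itD_add, mul_add, smul_add]
  · rw [add_zero]

lemma pmul_neg_left {f g : ℤ → A} : pmul (⇑D) (-f) g = -(pmul (⇑D) f g) := by
  funext n
  rw [Pi.neg_apply, pmul_def, pmul_def, ← finsum_neg_distrib]
  refine finsum_congr fun p => ?_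
  unfold T
  split
  · rw [Pi.neg_apply, neg_mul, smul_neg]
  · rw [neg_zero]

lemma pmul_neg_right {f g : ℤ → A} : pmul (⇑D) f (-g) = -(pmul (⇑D) f g) := by
  funext n
  rw [Pi.neg_apply, pmul_def, pmul_def, ← finsum_neg_distrib]
  refine finsum_congr fun p => ?_
  unfold T
  split
  · rw [Pi.neg_apply, itD_neg, mul_neg, smul_neg]
  · rw [neg_zero]

-- core scalar identity
lemma scalar_core (i j : ℤ) (W a : ℕ) (ha : a ≤ W) :
    ∑ s ∈ range (W + 1), zchoose i (W - s) * zchoose j s * ((W - s).choose a) =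
      zchoose (i + j - a) (W - a) * zchoose i a := by
  simp only [zchoose]
  have h1 : ∑ s ∈ range (W - a + 1), Ring.choose i (W - s) * Ring.choose j s * ((W - s).choose a) =
      ∑ s ∈ range (W + 1), Ring.choose i (W - s) * Ring.choose j s * ((W - s).choose a) := by
    apply Finset.sum_subset (by gcongr <;> omega)
    intro s hs hs'
    simp only [mem_range] at hs hs'
    rw [Nat.choose_eq_zero_of_lt (by omega), Nat.cast_zero, mul_zero]
  rw [← h1]
  have h2 : ∀ s ∈ range (W - a + 1),
      Ring.choose i (W - s) * Ring.choose j s * ((W - s).choose a) =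
        Ring.choose i a * (Ring.choose (i - a) (W - a - s) * Ring.choose j s) := by
    intro s hs
    simp only [mem_range] at hs
    have hle : a ≤ W - s := by omega
    have key := Ring.choose_smul_choose (i : ℤ) (n := W - s) (k := a) hle
    rw [nsmul_eq_mul] at key
    have hsub : W - s - a = W - a - s := by omega
    calc Ring.choose i (W - s) * Ring.choose j s * ((W - s).choose a)
        = (((W - s).choose a : ℤ) * Ring.choose i (W - s)) * Ring.choose j s := by ring
      _ = (Ring.choose i a * Ring.choose (i - a) (W - s - a)) * Ring.choose j s := by rw [key]
      _ = Ring.choose i a * (Ring.choose (i - a) (W - a - s) * Ring.choose j s) := by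
          rw [hsub]; ring
  rw [Finset.sum_congr rfl h2, ← Finset.mul_sum]
  have hv := Ring.add_choose_eq (R := ℤ) (r := i - a) (s := j) (W - a) (Commute.all _ _)
  rw [Finset.Nat.sum_antidiagonal_eq_sum_range_succ
    (fun u v => Ring.choose (i - (a:ℤ)) u * Ring.choose (j:ℤ) v) (W - a),
    ← Finset.sum_range_reflect] at hv
  have h3 : ∑ s ∈ range (W - a + 1), Ring.choose (i - a) (W - a - s) * Ring.choose j s =
      Ring.choose (i - (a:ℤ) + j) (W - a) := by
    rw [hv]
    refine Finset.sum_congr rfl fun s hs => ?_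
    simp only [mem_range] at hs
    have e1 : W - a + 1 - 1 - s = W - a - s := by omega
    have e2 : W - a - (W - a - s) = s := by omega
    rw [e1, e2]
  rw [h3]
  have : i - (a : ℤ) + j = i + j - a := by ring
  rw [this, mul_comm]

lemma itD_zsmul (r : ℕ) (c : ℤ) (a : A) : (⇑D)^[r] (c • a) = c • (⇑D)^[r] a := by
  induction r generalizing a with
  | zero => rfl
  | succ r ih => rw [Function.iterate_succ_apply', ih, Function.iterate_succ_apply',
      Derivation.map_smul]

/-- Summand for `(f*g)*h`. -/
noncomputable def A3 (D : A → A) (f g h : ℤ → A) (n i j k m : ℤ) : A :=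
  if 0 ≤ m + k - n then
    (if 0 ≤ i + j - m then
      (zchoose m (m + k - n).toNat * zchoose i (i + j - m).toNat) •
        (f i * D^[(i + j - m).toNat] (g j) * D^[(m + k - n).toNat] (h k))
    else 0)
  else 0

/-- Summand for `f*(g*h)`. -/
noncomputable def B3 (D : A → A) (f g h : ℤ → A) (n i j k m : ℤ) : A :=
  if 0 ≤ i + m - n then
    (if 0 ≤ j + k - m then
      ∑ a ∈ range ((i + m - n).toNat + 1),
        (zchoose i (i + m - n).toNat * zchoose j (j + k - m).toNat *
          ((i + m - n).toNat.choose a)) •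
          (f i * D^[a] (g j) * D^[(i + m - n).toNat - a + (j + k - m).toNat] (h k))
    else 0)
  else 0

lemma A3_ne {f g h : ℤ → A} {n i j k m : ℤ} (hA : A3 (⇑D) f g h n i j k m ≠ 0) :
    f i ≠ 0 ∧ g j ≠ 0 ∧ h k ≠ 0 ∧ n ≤ m + k ∧ m ≤ i + j := by
  by_contra hc
  apply hA
  unfold A3
  by_cases c1 : 0 ≤ m + k - n
  · rw [if_pos c1]
    by_cases c2 : 0 ≤ i + j - m
    · rw [if_pos c2]
      push_neg at hc
      by_cases e1 : f i = 0
      · rw [e1, zero_mul, zero_mul, smul_zero]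
      by_cases e2 : g j = 0
      · rw [e2, itD_zero, mul_zero, zero_mul, smul_zero]
      by_cases e3 : h k = 0
      · rw [e3, itD_zero, mul_zero, smul_zero]
      exact absurd (hc e1 e2 e3 (by omega)) (by omega)
    · rw [if_neg c2]
  · rw [if_neg c1]

lemma B3_ne {f g h : ℤ → A} {n i j k m : ℤ} (hB : B3 (⇑D) f g h n i j k m ≠ 0) :
    f i ≠ 0 ∧ g j ≠ 0 ∧ h k ≠ 0 ∧ n ≤ i + m ∧ m ≤ j + k := by
  by_contra hc
  apply hB
  unfold B3
  by_cases c1 : 0 ≤ i + m - n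
  · rw [if_pos c1]
    by_cases c2 : 0 ≤ j + k - m
    · rw [if_pos c2]
      push_neg at hc
      apply Finset.sum_eq_zero
      intro a _
      by_cases e1 : f i = 0
      · rw [e1, zero_mul, zero_mul, smul_zero]
      by_cases e2 : g j = 0
      · rw [e2, itD_zero, mul_zero, zero_mul, smul_zero]
      by_cases e3 : h k = 0
      · rw [e3, itD_zero, mul_zero, smul_zero]
      exact absurd (hc e1 e2 e3 (by omega)) (by omega)
    · rw [if_neg c2]
  · rw [if_neg c1]

/-- The core identity: for fixed `i j k`, summing over `m` gives the same result. -/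
lemma core_identity (f g h : ℤ → A) (n i j k : ℤ) (G : Finset ℤ)
    (hG1 : ∀ m, n - k ≤ m → m ≤ i + j → m ∈ G)
    (hG2 : ∀ m, n - i ≤ m → m ≤ j + k → m ∈ G) :
    ∑ m ∈ G, A3 (⇑D) f g h n i j k m = ∑ m ∈ G, B3 (⇑D) f g h n i j k m := by
  by_cases hw : i + j + k - n < 0
  · rw [Finset.sum_eq_zero, Finset.sum_eq_zero]
    · intro m _
      unfold B3
      split
      · split
        · exfalso; omega
        · rfl
      · rfl
    · intro m _
      unfold A3
      split
      · split
        · exfalso; omega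
        · rfl
      · rfl
  · push_neg at hw
    set W : ℕ := (i + j + k - n).toNat with hWdef
    have hWw : (W : ℤ) = i + j + k - n := Int.toNat_of_nonneg (by omega)
    -- LHS
    have hsubL : Icc (n - k) (i + j) ⊆ G := by
      intro m hm
      simp only [mem_Icc] at hm
      exact hG1 m hm.1 hm.2
    have hvanL : ∀ m ∈ G, m ∉ Icc (n - k) (i + j) → A3 (⇑D) f g h n i j k m = 0 := by
      intro m _ hm
      simp only [mem_Icc, not_and, not_le] at hm
      unfold A3
      split
      · split
        · exfalso; omega
        · rfl
      · rfl
    have hL : ∑ m ∈ G, A3 (⇑D) f g h n i j k m =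
        ∑ p ∈ range (W + 1), (zchoose (i + j - p) (W - p) * zchoose i p) •
          (f i * (⇑D)^[p] (g j) * (⇑D)^[W - p] (h k)) := by
      rw [← Finset.sum_subset hsubL hvanL]
      apply Finset.sum_nbij' (i := fun m => (i + j - m).toNat) (j := fun p => i + j - (p : ℤ))
      · intro m hm
        simp only [mem_Icc] at hm
        simp only [mem_range]
        omega
      · intro p hp
        simp only [mem_range] at hp
        simp only [mem_Icc]
        omega
      · intro m hm
        simp only [mem_Icc] at hm
        omega
      · intro p hp
        simp only [mem_range] at hp
        omega
      · intro m hm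
        simp only [mem_Icc] at hm
        unfold A3
        rw [if_pos (by omega), if_pos (by omega)]
        have e1 : (m + k - n).toNat = W - (i + j - m).toNat := by omega
        have e2 : i + j - ((i + j - m).toNat : ℤ) = m := by omega
        rw [e1, e2]
    -- RHS
    have hsubR : Icc (n - i) (j + k) ⊆ G := by
      intro m hm
      simp only [mem_Icc] at hm
      exact hG2 m hm.1 hm.2
    have hvanR : ∀ m ∈ G, m ∉ Icc (n - i) (j + k) → B3 (⇑D) f g h n i j k m = 0 := by
      intro m _ hm
      simp only [mem_Icc, not_and, not_le] at hm
      unfold B3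
      split
      · split
        · exfalso; omega
        · rfl
      · rfl
    have step : ∀ m ∈ Icc (n - i) (j + k), B3 (⇑D) f g h n i j k m =
        ∑ a ∈ range (W + 1),
          (zchoose i (i + m - n).toNat * zchoose j (j + k - m).toNat *
            ((i + m - n).toNat.choose a)) •
            (f i * (⇑D)^[a] (g j) * (⇑D)^[W - a] (h k)) := by
      intro m hm
      simp only [mem_Icc] at hm
      unfold B3
      rw [if_pos (by omega), if_pos (by omega)]
      have hr : ((i + m - n).toNat : ℤ) = i + m - n := Int.toNat_of_nonneg (by omega)
      have hs : ((j + k - m).toNat : ℤ) = j + k - m := Int.toNat_of_nonneg (by omega)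
      have hW2 : W = (i + m - n).toNat + (j + k - m).toNat := by omega
      rw [Finset.sum_congr rfl (fun a ha => ?e)]
      case e =>
        simp only [mem_range] at ha
        have : (i + m - n).toNat - a + (j + k - m).toNat = W - a := by omega
        rw [this]
      apply Finset.sum_subset (Finset.range_subset_range.2 (by omega))
      intro a _ ha
      simp only [mem_range, not_lt] at ha
      rw [Nat.choose_eq_zero_of_lt (by omega), Nat.cast_zero, mul_zero, zero_smul]
    have hR : ∑ m ∈ G, B3 (⇑D) f g h n i j k m =
        ∑ p ∈ range (W + 1),
          (∑ s ∈ range (W + 1), zchoose i (W - s) * zchoose j s * ((W - s).choose p)) •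
            (f i * (⇑D)^[p] (g j) * (⇑D)^[W - p] (h k)) := by
      rw [← Finset.sum_subset hsubR hvanR, Finset.sum_congr rfl step, Finset.sum_comm]
      refine Finset.sum_congr rfl fun p hp => ?_
      rw [← Finset.sum_smul]
      congr 1
      apply Finset.sum_nbij' (i := fun m => (j + k - m).toNat) (j := fun s => j + k - (s : ℤ))
      · intro m hm
        simp only [mem_Icc] at hm
        simp only [mem_range]
        omega
      · intro s hs
        simp only [mem_range] at hs
        simp only [mem_Icc]
        omega
      · intro m hm
        simp only [mem_Icc] at hm
        omega
      · intro s hs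
        simp only [mem_range] at hs
        omega
      · intro m hm
        simp only [mem_Icc] at hm
        have e1 : (i + m - n).toNat = W - (j + k - m).toNat := by omega
        rw [e1]
    rw [hL, hR]
    refine Finset.sum_congr rfl fun p hp => ?_
    simp only [mem_range] at hp
    congr 1
    rw [scalar_core i j W p (by omega)]

lemma sum_rot3 {M : Type*} [AddCommMonoid M] (s1 s2 s3 : Finset ℤ) (t : ℤ → ℤ → ℤ → M) :
    ∑ x ∈ s1, ∑ y ∈ s2, ∑ z ∈ s3, t x y z = ∑ y ∈ s2, ∑ z ∈ s3, ∑ x ∈ s1, t x y z := by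
  rw [Finset.sum_comm]
  exact Finset.sum_congr rfl fun y _ => Finset.sum_comm

lemma sum_rot4 {M : Type*} [AddCommMonoid M] (s1 s2 s3 s4 : Finset ℤ)
    (t : ℤ → ℤ → ℤ → ℤ → M) :
    ∑ x ∈ s1, ∑ y ∈ s2, ∑ z ∈ s3, ∑ w ∈ s4, t x y z w
      = ∑ y ∈ s2, ∑ z ∈ s3, ∑ w ∈ s4, ∑ x ∈ s1, t x y z w := by
  rw [Finset.sum_comm]
  exact Finset.sum_congr rfl fun y _ => sum_rot3 _ _ _ _

lemma smul_collect (c1 c2 : ℤ) (c3 : ℕ) (x y z : A) :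
    c1 • (x * (c2 • (c3 • (y * z)))) = (c1 * c2 * (c3 : ℤ)) • (x * y * z) := by
  rw [mul_smul_comm, mul_smul_comm, mul_assoc x y z, mul_smul, mul_smul, natCast_zsmul]

theorem pmul_assoc {f g h : ℤ → A} {Nf Ng Nh : ℤ}
    (hf : ∀ i, Nf < i → f i = 0) (hg : ∀ i, Ng < i → g i = 0)
    (hh : ∀ i, Nh < i → h i = 0) :
    pmul (⇑D) (pmul (⇑D) f g) h = pmul (⇑D) f (pmul (⇑D) g h) := by
  funext n
  have hfg : ∀ m, Nf + Ng < m → pmul (⇑D) f g m = 0 := fun m hm => pmul_bound D hf hg m hm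
  have hgh : ∀ m, Ng + Nh < m → pmul (⇑D) g h m = 0 := fun m hm => pmul_bound D hg hh m hm
  set E : ℤ := |n| + |Nf| + |Ng| + |Nh| + 1 with hE
  have ha1 : Nf ≤ |Nf| := le_abs_self _
  have ha2 : Ng ≤ |Ng| := le_abs_self _
  have ha3 : Nh ≤ |Nh| := le_abs_self _
  have ha4 : -|n| ≤ n := neg_abs_le _
  have ha5 : n ≤ |n| := le_abs_self _
  have ha6 : 0 ≤ |n| := abs_nonneg _
  have ha7 : 0 ≤ |Nf| := abs_nonneg _
  have ha8 : 0 ≤ |Ng| := abs_nonneg _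
  have ha9 : 0 ≤ |Nh| := abs_nonneg _
  set F : Finset ℤ := Icc (-(3 * E)) (3 * E) with hF
  set G : Finset ℤ := Icc (-(7 * E)) (7 * E) with hG
  -- LHS
  have step1 : pmul (⇑D) (pmul (⇑D) f g) h n =
      ∑ p ∈ Icc (n - Nh) (Nf + Ng) ×ˢ Icc (n - (Nf + Ng)) Nh,
        T (⇑D) (pmul (⇑D) f g) h n p :=
    pmul_eq_sum_Icc D hfg hh
  have step2 : ∀ p ∈ Icc (n - Nh) (Nf + Ng) ×ˢ Icc (n - (Nf + Ng)) Nh,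
      T (⇑D) (pmul (⇑D) f g) h n p =
        ∑ q ∈ Icc (n - Nh - Ng) Nf ×ˢ Icc (n - Nh - Nf) Ng,
          A3 (⇑D) f g h n q.1 q.2 p.2 p.1 := by
    intro p hp
    simp only [mem_product, mem_Icc] at hp
    obtain ⟨⟨hm1, hm2⟩, hk1, hk2⟩ := hp
    unfold T
    by_cases c1 : 0 ≤ p.1 + p.2 - n
    · rw [if_pos c1, pmul_eq_sum D (S := Icc (n - Nh - Ng) Nf ×ˢ Icc (n - Nh - Nf) Ng)
        (fun q h1 h2 h3 => ?_)]
      · rw [Finset.sum_mul, Finset.smul_sum]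
        refine Finset.sum_congr rfl fun q _ => ?_
        unfold T A3
        rw [if_pos c1]
        by_cases c2 : 0 ≤ q.1 + q.2 - p.1
        · rw [if_pos c2, if_pos c2, smul_mul_assoc, smul_smul]
        · rw [if_neg c2, if_neg c2, zero_mul, smul_zero]
      · have b1 : q.1 ≤ Nf := by by_contra hb; exact h1 (hf _ (by omega))
        have b2 : q.2 ≤ Ng := by by_contra hb; exact h2 (hg _ (by omega))
        simp only [mem_product, mem_Icc]
        omega
    · rw [if_neg c1]
      symm
      apply Finset.sum_eq_zero
      intro q _
      unfold A3
      rw [if_neg c1]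
  have step4 : ∀ p ∈ Icc (n - Nh) (Nf + Ng) ×ˢ Icc (n - (Nf + Ng)) Nh,
      ∑ q ∈ Icc (n - Nh - Ng) Nf ×ˢ Icc (n - Nh - Nf) Ng, A3 (⇑D) f g h n q.1 q.2 p.2 p.1
        = ∑ q ∈ F ×ˢ F, A3 (⇑D) f g h n q.1 q.2 p.2 p.1 := by
    intro p hp
    simp only [mem_product, mem_Icc] at hp
    apply Finset.sum_subset
    · apply Finset.product_subset_product <;> (apply Finset.Icc_subset_Icc <;> omega)
    · intro q _ hq
      by_contra hne
      obtain ⟨e1, e2, e3, e4, e5⟩ := A3_ne D hne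
      have b1 : q.1 ≤ Nf := by by_contra hb; exact e1 (hf _ (by omega))
      have b2 : q.2 ≤ Ng := by by_contra hb; exact e2 (hg _ (by omega))
      simp only [mem_product, mem_Icc] at hq
      omega
  have step5 : ∑ p ∈ Icc (n - Nh) (Nf + Ng) ×ˢ Icc (n - (Nf + Ng)) Nh,
        ∑ q ∈ F ×ˢ F, A3 (⇑D) f g h n q.1 q.2 p.2 p.1
      = ∑ p ∈ G ×ˢ F, ∑ q ∈ F ×ˢ F, A3 (⇑D) f g h n q.1 q.2 p.2 p.1 := by
    apply Finset.sum_subset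
    · apply Finset.product_subset_product <;> (apply Finset.Icc_subset_Icc <;> omega)
    · intro p _ hp
      apply Finset.sum_eq_zero
      intro q _
      by_contra hne
      obtain ⟨e1, e2, e3, e4, e5⟩ := A3_ne D hne
      have b1 : q.1 ≤ Nf := by by_contra hb; exact e1 (hf _ (by omega))
      have b2 : q.2 ≤ Ng := by by_contra hb; exact e2 (hg _ (by omega))
      have b3 : p.2 ≤ Nh := by by_contra hb; exact e3 (hh _ (by omega))
      simp only [mem_product, mem_Icc] at hp
      omega
  have hLHS : pmul (⇑D) (pmul (⇑D) f g) h n =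
      ∑ i ∈ F, ∑ j ∈ F, ∑ k ∈ F, ∑ m ∈ G, A3 (⇑D) f g h n i j k m := by
    rw [step1, Finset.sum_congr rfl step2, Finset.sum_congr rfl step4, step5]
    simp only [Finset.sum_product]
    rw [sum_rot4 G F F F (fun m k i j => A3 (⇑D) f g h n i j k m),
      sum_rot4 F F F G (fun k i j m => A3 (⇑D) f g h n i j k m)]
    exact Finset.sum_congr rfl fun i _ => Finset.sum_congr rfl fun j _ => Finset.sum_comm
  -- RHS
  have step1' : pmul (⇑D) f (pmul (⇑D) g h) n =
      ∑ p ∈ Icc (n - (Ng + Nh)) Nf ×ˢ Icc (n - Nf) (Ng + Nh),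
        T (⇑D) f (pmul (⇑D) g h) n p :=
    pmul_eq_sum_Icc D hf hgh
  have step2' : ∀ p ∈ Icc (n - (Ng + Nh)) Nf ×ˢ Icc (n - Nf) (Ng + Nh),
      T (⇑D) f (pmul (⇑D) g h) n p =
        ∑ q ∈ Icc (n - Nf - Nh) Ng ×ˢ Icc (n - Nf - Ng) Nh,
          B3 (⇑D) f g h n p.1 q.1 q.2 p.2 := by
    intro p hp
    simp only [mem_product, mem_Icc] at hp
    obtain ⟨⟨hi1, hi2⟩, hm1, hm2⟩ := hp
    unfold T
    by_cases c1 : 0 ≤ p.1 + p.2 - n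
    · rw [if_pos c1, pmul_eq_sum D (S := Icc (n - Nf - Nh) Ng ×ˢ Icc (n - Nf - Ng) Nh)
        (fun q h1 h2 h3 => ?_)]
      · rw [itD_sum, Finset.mul_sum, Finset.smul_sum]
        refine Finset.sum_congr rfl fun q _ => ?_
        unfold T B3
        rw [if_pos c1]
        by_cases c2 : 0 ≤ q.1 + q.2 - p.2
        · rw [if_pos c2, if_pos c2, itD_zsmul, itD_leibniz']
          rw [Finset.smul_sum, Finset.mul_sum, Finset.smul_sum]
          refine Finset.sum_congr rfl fun a ha => ?_
          simp only [mem_range] at ha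
          rw [← Function.iterate_add_apply]
          exact smul_collect _ _ _ _ _ _
        · rw [if_neg c2, if_neg c2, itD_zero, mul_zero, smul_zero]
      · have b1 : q.1 ≤ Ng := by by_contra hb; exact h1 (hg _ (by omega))
        have b2 : q.2 ≤ Nh := by by_contra hb; exact h2 (hh _ (by omega))
        simp only [mem_product, mem_Icc]
        omega
    · rw [if_neg c1]
      symm
      apply Finset.sum_eq_zero
      intro q _
      unfold B3
      rw [if_neg c1]
  have step4' : ∀ p ∈ Icc (n - (Ng + Nh)) Nf ×ˢ Icc (n - Nf) (Ng + Nh),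
      ∑ q ∈ Icc (n - Nf - Nh) Ng ×ˢ Icc (n - Nf - Ng) Nh, B3 (⇑D) f g h n p.1 q.1 q.2 p.2
        = ∑ q ∈ F ×ˢ F, B3 (⇑D) f g h n p.1 q.1 q.2 p.2 := by
    intro p hp
    simp only [mem_product, mem_Icc] at hp
    apply Finset.sum_subset
    · apply Finset.product_subset_product <;> (apply Finset.Icc_subset_Icc <;> omega)
    · intro q _ hq
      by_contra hne
      obtain ⟨e1, e2, e3, e4, e5⟩ := B3_ne D hne
      have b1 : q.1 ≤ Ng := by by_contra hb; exact e2 (hg _ (by omega))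
      have b2 : q.2 ≤ Nh := by by_contra hb; exact e3 (hh _ (by omega))
      simp only [mem_product, mem_Icc] at hq
      omega
  have step5' : ∑ p ∈ Icc (n - (Ng + Nh)) Nf ×ˢ Icc (n - Nf) (Ng + Nh),
        ∑ q ∈ F ×ˢ F, B3 (⇑D) f g h n p.1 q.1 q.2 p.2
      = ∑ p ∈ F ×ˢ G, ∑ q ∈ F ×ˢ F, B3 (⇑D) f g h n p.1 q.1 q.2 p.2 := by
    apply Finset.sum_subset
    · apply Finset.product_subset_product <;> (apply Finset.Icc_subset_Icc <;> omega)
    · intro p _ hp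
      apply Finset.sum_eq_zero
      intro q _
      by_contra hne
      obtain ⟨e1, e2, e3, e4, e5⟩ := B3_ne D hne
      have b1 : p.1 ≤ Nf := by by_contra hb; exact e1 (hf _ (by omega))
      have b2 : q.1 ≤ Ng := by by_contra hb; exact e2 (hg _ (by omega))
      have b3 : q.2 ≤ Nh := by by_contra hb; exact e3 (hh _ (by omega))
      simp only [mem_product, mem_Icc] at hp
      omega
  have hRHS : pmul (⇑D) f (pmul (⇑D) g h) n =
      ∑ i ∈ F, ∑ j ∈ F, ∑ k ∈ F, ∑ m ∈ G, B3 (⇑D) f g h n i j k m := by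
    rw [step1', Finset.sum_congr rfl step2', Finset.sum_congr rfl step4', step5']
    simp only [Finset.sum_product]
    exact Finset.sum_congr rfl fun i _ => sum_rot3 G F F
      (fun m j k => B3 (⇑D) f g h n i j k m)
  rw [hLHS, hRHS]
  refine Finset.sum_congr rfl fun i hi => Finset.sum_congr rfl fun j hj =>
    Finset.sum_congr rfl fun k hk => ?_
  simp only [hF, mem_Icc] at hi hj hk
  apply core_identity
  · intro m h1 h2
    simp only [hG, mem_Icc]
    omega
  · intro m h1 h2
    simp only [hG, mem_Icc]
    omega

-- ### part lemmas
lemma posPart_add_negPart (f : ℤ → A) : TwoBKP.posPart f + TwoBKP.negPart f = f := by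
  funext n
  simp only [Pi.add_apply, TwoBKP.posPart, TwoBKP.negPart]
  by_cases hn : 0 ≤ n
  · rw [if_pos hn, if_neg (by omega), add_zero]
  · rw [if_neg hn, if_pos (by omega), zero_add]

lemma posPart_bound {f : ℤ → A} {N : ℤ} (hf : ∀ i, N < i → f i = 0) :
    ∀ i, N < i → TwoBKP.posPart f i = 0 := by
  intro i hi
  simp only [TwoBKP.posPart, hf i hi]
  split <;> rfl

lemma negPart_bound {f : ℤ → A} {N : ℤ} (hf : ∀ i, N < i → f i = 0) :
    ∀ i, N < i → TwoBKP.negPart f i = 0 := by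
  intro i hi
  simp only [TwoBKP.negPart, hf i hi]
  split <;> rfl

lemma posPart_supp (f : ℤ → A) : ∀ i, i < 0 → TwoBKP.posPart f i = 0 := by
  intro i hi
  simp only [TwoBKP.posPart]
  rw [if_neg (by omega)]

lemma negPart_supp (f : ℤ → A) : ∀ i, 0 ≤ i → TwoBKP.negPart f i = 0 := by
  intro i hi
  simp only [TwoBKP.negPart]
  rw [if_neg (by omega)]

lemma neg_bound {f : ℤ → A} {N : ℤ} (hf : ∀ i, N < i → f i = 0) :
    ∀ i, N < i → (-f) i = 0 := by
  intro i hi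
  simp [hf i hi]

lemma posPart_of_split {u v : ℤ → A} (hu : ∀ n, n < 0 → u n = 0)
    (hv : ∀ n, 0 ≤ n → v n = 0) : TwoBKP.posPart (u + v) = u := by
  funext n
  simp only [TwoBKP.posPart, Pi.add_apply]
  by_cases hn : 0 ≤ n
  · rw [if_pos hn, hv n hn, add_zero]
  · rw [if_neg hn, hu n (by omega)]

lemma negPart_of_split {u v : ℤ → A} (hu : ∀ n, n < 0 → u n = 0)
    (hv : ∀ n, 0 ≤ n → v n = 0) : TwoBKP.negPart (u + v) = v := by
  funext n
  simp only [TwoBKP.negPart, Pi.add_apply]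
  by_cases hn : n < 0
  · rw [if_pos hn, hu n hn, zero_add]
  · rw [if_neg hn, hv n (by omega)]

lemma rMat_of_split {u v : ℤ → A} (hu : ∀ n, n < 0 → u n = 0)
    (hv : ∀ n, 0 ≤ n → v n = 0) : rMat (u + v) = u - v := by
  rw [rMat, posPart_of_split hu hv, negPart_of_split hu hv]

-- ### brk lemmas
lemma brk_neg_left (x y : ℤ → A) : brk (⇑D) (-x) y = -brk (⇑D) x y := by
  unfold brk
  rw [pmul_neg_left, pmul_neg_right]
  abel

lemma brk_neg_right (x y : ℤ → A) : brk (⇑D) x (-y) = -brk (⇑D) x y := by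
  unfold brk
  rw [pmul_neg_left, pmul_neg_right]
  abel

lemma brk_add_left {x1 x2 y : ℤ → A} {Nx Ny : ℤ}
    (hx1 : ∀ i, Nx < i → x1 i = 0) (hx2 : ∀ i, Nx < i → x2 i = 0)
    (hy : ∀ i, Ny < i → y i = 0) :
    brk (⇑D) (x1 + x2) y = brk (⇑D) x1 y + brk (⇑D) x2 y := by
  unfold brk
  rw [pmul_add_left D hx1 hx2 hy, pmul_add_right D hy hx1 hx2]
  abel

lemma brk_add_right {x y1 y2 : ℤ → A} {Nx Ny : ℤ}
    (hx : ∀ i, Nx < i → x i = 0) (hy1 : ∀ i, Ny < i → y1 i = 0)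
    (hy2 : ∀ i, Ny < i → y2 i = 0) :
    brk (⇑D) x (y1 + y2) = brk (⇑D) x y1 + brk (⇑D) x y2 := by
  unfold brk
  rw [pmul_add_right D hx hy1 hy2, pmul_add_left D hy1 hy2 hx]
  abel

lemma brk_expand4 {x1 x2 y1 y2 : ℤ → A} {Nx Ny : ℤ}
    (hx1 : ∀ i, Nx < i → x1 i = 0) (hx2 : ∀ i, Nx < i → x2 i = 0)
    (hy1 : ∀ i, Ny < i → y1 i = 0) (hy2 : ∀ i, Ny < i → y2 i = 0) :
    brk (⇑D) (x1 + x2) (y1 + y2) =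
      brk (⇑D) x1 y1 + brk (⇑D) x1 y2 + brk (⇑D) x2 y1 + brk (⇑D) x2 y2 := by
  have hy : ∀ i, Ny < i → (y1 + y2) i = 0 := by
    intro i hi; simp [hy1 i hi, hy2 i hi]
  rw [brk_add_left D hx1 hx2 hy, brk_add_right D hx1 hy1 hy2, brk_add_right D hx2 hy1 hy2]
  abel

lemma brk_sub_sub {x1 x2 y1 y2 : ℤ → A} {Nx Ny : ℤ}
    (hx1 : ∀ i, Nx < i → x1 i = 0) (hx2 : ∀ i, Nx < i → x2 i = 0)
    (hy1 : ∀ i, Ny < i → y1 i = 0) (hy2 : ∀ i, Ny < i → y2 i = 0) :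
    brk (⇑D) (x1 - x2) (y1 - y2) =
      brk (⇑D) x1 y1 - brk (⇑D) x1 y2 - brk (⇑D) x2 y1 + brk (⇑D) x2 y2 := by
  rw [sub_eq_add_neg x1 x2, sub_eq_add_neg y1 y2,
    brk_expand4 D hx1 (neg_bound hx2) hy1 (neg_bound hy2),
    brk_neg_left, brk_neg_right, brk_neg_right, brk_neg_left]
  abel

lemma brk_sub_add {x1 x2 y1 y2 : ℤ → A} {Nx Ny : ℤ}
    (hx1 : ∀ i, Nx < i → x1 i = 0) (hx2 : ∀ i, Nx < i → x2 i = 0)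
    (hy1 : ∀ i, Ny < i → y1 i = 0) (hy2 : ∀ i, Ny < i → y2 i = 0) :
    brk (⇑D) (x1 - x2) (y1 + y2) =
      brk (⇑D) x1 y1 + brk (⇑D) x1 y2 - brk (⇑D) x2 y1 - brk (⇑D) x2 y2 := by
  rw [sub_eq_add_neg x1 x2, brk_expand4 D hx1 (neg_bound hx2) hy1 hy2,
    brk_neg_left, brk_neg_left]
  abel

lemma brk_add_sub {x1 x2 y1 y2 : ℤ → A} {Nx Ny : ℤ}
    (hx1 : ∀ i, Nx < i → x1 i = 0) (hx2 : ∀ i, Nx < i → x2 i = 0)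
    (hy1 : ∀ i, Ny < i → y1 i = 0) (hy2 : ∀ i, Ny < i → y2 i = 0) :
    brk (⇑D) (x1 + x2) (y1 - y2) =
      brk (⇑D) x1 y1 - brk (⇑D) x1 y2 + brk (⇑D) x2 y1 - brk (⇑D) x2 y2 := by
  rw [sub_eq_add_neg y1 y2, brk_expand4 D hx1 hx2 hy1 (neg_bound hy2),
    brk_neg_right, brk_neg_right]
  abel

lemma brk_bound {x y : ℤ → A} {Nx Ny : ℤ}
    (hx : ∀ i, Nx < i → x i = 0) (hy : ∀ i, Ny < i → y i = 0) :
    ∀ n, Nx + Ny < n → brk (⇑D) x y n = 0 := by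
  intro n hn
  show pmul (⇑D) x y n - pmul (⇑D) y x n = 0
  rw [pmul_bound D hx hy n hn, pmul_bound D hy hx n (by omega), sub_zero]

lemma brk_pos_supp {x y : ℤ → A} (hx : ∀ i, i < 0 → x i = 0)
    (hy : ∀ i, i < 0 → y i = 0) : ∀ n, n < 0 → brk (⇑D) x y n = 0 := by
  intro n hn
  show pmul (⇑D) x y n - pmul (⇑D) y x n = 0
  rw [pmul_pos_supp D hx hy n hn, pmul_pos_supp D hy hx n hn, sub_zero]

lemma brk_neg_supp {x y : ℤ → A} (hx : ∀ i, 0 ≤ i → x i = 0)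
    (hy : ∀ i, 0 ≤ i → y i = 0) : ∀ n, 0 ≤ n → brk (⇑D) x y n = 0 := by
  intro n hn
  show pmul (⇑D) x y n - pmul (⇑D) y x n = 0
  rw [pmul_neg_supp D hx hy n hn, pmul_neg_supp D hy hx n hn, sub_zero]

lemma pmul_sub_left {f1 f2 g : ℤ → A} {Nf Ng : ℤ}
    (hf1 : ∀ i, Nf < i → f1 i = 0) (hf2 : ∀ i, Nf < i → f2 i = 0)
    (hg : ∀ i, Ng < i → g i = 0) :
    pmul (⇑D) (f1 - f2) g = pmul (⇑D) f1 g - pmul (⇑D) f2 g := by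
  rw [sub_eq_add_neg f1 f2, pmul_add_left D hf1 (neg_bound hf2) hg, pmul_neg_left,
    ← sub_eq_add_neg]

lemma pmul_sub_right {f g1 g2 : ℤ → A} {Nf Ng : ℤ}
    (hf : ∀ i, Nf < i → f i = 0) (hg1 : ∀ i, Ng < i → g1 i = 0)
    (hg2 : ∀ i, Ng < i → g2 i = 0) :
    pmul (⇑D) f (g1 - g2) = pmul (⇑D) f g1 - pmul (⇑D) f g2 := by
  rw [sub_eq_add_neg g1 g2, pmul_add_right D hf hg1 (neg_bound hg2), pmul_neg_right,
    ← sub_eq_add_neg]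

/-- Jacobi identity for the commutator bracket. -/
lemma brk_jacobi {x y z : ℤ → A} {Nx Ny Nz : ℤ}
    (hx : ∀ i, Nx < i → x i = 0) (hy : ∀ i, Ny < i → y i = 0)
    (hz : ∀ i, Nz < i → z i = 0) :
    brk (⇑D) x (brk (⇑D) y z) + brk (⇑D) y (brk (⇑D) z x)
      + brk (⇑D) z (brk (⇑D) x y) = 0 := by
  have hxy : ∀ m, Nx + Ny < m → pmul (⇑D) x y m = 0 := pmul_bound D hx hy
  have hyx : ∀ m, Nx + Ny < m → pmul (⇑D) y x m = 0 := fun m hm => pmul_bound D hy hx m (by omega)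
  have hyz : ∀ m, Ny + Nz < m → pmul (⇑D) y z m = 0 := pmul_bound D hy hz
  have hzy : ∀ m, Ny + Nz < m → pmul (⇑D) z y m = 0 := fun m hm => pmul_bound D hz hy m (by omega)
  have hzx : ∀ m, Nz + Nx < m → pmul (⇑D) z x m = 0 := pmul_bound D hz hx
  have hxz : ∀ m, Nz + Nx < m → pmul (⇑D) x z m = 0 := fun m hm => pmul_bound D hx hz m (by omega)
  unfold brk
  rw [pmul_sub_right D hx hyz hzy, pmul_sub_left D hyz hzy hx,
    pmul_sub_right D hy hzx hxz, pmul_sub_left D hzx hxz hy,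
    pmul_sub_right D hz hxy hyx, pmul_sub_left D hxy hyx hz,
    pmul_assoc D hy hz hx, pmul_assoc D hz hy hx,
    pmul_assoc D hz hx hy, pmul_assoc D hx hz hy,
    pmul_assoc D hx hy hz, pmul_assoc D hy hx hz]
  abel

/-- Key structural identity: `[X,Y]_R = 2[X₊,Y₊] − 2[X₋,Y₋]`. -/
lemma brkR_eq {x y : ℤ → A} {Nx Ny : ℤ}
    (hx : ∀ i, Nx < i → x i = 0) (hy : ∀ i, Ny < i → y i = 0) :
    brkR (⇑D) x y =
      (brk (⇑D) (TwoBKP.posPart x) (TwoBKP.posPart y) + brk (⇑D) (TwoBKP.posPart x) (TwoBKP.posPart y))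
        - (brk (⇑D) (TwoBKP.negPart x) (TwoBKP.negPart y) + brk (⇑D) (TwoBKP.negPart x) (TwoBKP.negPart y)) := by
  have e1 : brkR (⇑D) x y =
      brk (⇑D) (TwoBKP.posPart x - TwoBKP.negPart x) (TwoBKP.posPart y + TwoBKP.negPart y)
        + brk (⇑D) (TwoBKP.posPart x + TwoBKP.negPart x) (TwoBKP.posPart y - TwoBKP.negPart y) := by
    rw [posPart_add_negPart x, posPart_add_negPart y]
    rfl
  rw [e1, brk_sub_add D (posPart_bound hx) (negPart_bound hx)
      (posPart_bound hy) (negPart_bound hy),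
    brk_add_sub D (posPart_bound hx) (negPart_bound hx)
      (posPart_bound hy) (negPart_bound hy)]
  abel

/-- Structural form of `[X,[Y,Z]_R]_R`. -/
lemma brkR_brkR {x y z : ℤ → A} {Nx Ny Nz : ℤ}
    (hx : ∀ i, Nx < i → x i = 0) (hy : ∀ i, Ny < i → y i = 0)
    (hz : ∀ i, Nz < i → z i = 0) :
    brkR (⇑D) x (brkR (⇑D) y z) =
      (brk (⇑D) (TwoBKP.posPart x) (brk (⇑D) (TwoBKP.posPart y) (TwoBKP.posPart z))
        + brk (⇑D) (TwoBKP.posPart x) (brk (⇑D) (TwoBKP.posPart y) (TwoBKP.posPart z))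
        + (brk (⇑D) (TwoBKP.posPart x) (brk (⇑D) (TwoBKP.posPart y) (TwoBKP.posPart z))
        + brk (⇑D) (TwoBKP.posPart x) (brk (⇑D) (TwoBKP.posPart y) (TwoBKP.posPart z))))
      + (brk (⇑D) (TwoBKP.negPart x) (brk (⇑D) (TwoBKP.negPart y) (TwoBKP.negPart z))
        + brk (⇑D) (TwoBKP.negPart x) (brk (⇑D) (TwoBKP.negPart y) (TwoBKP.negPart z))
        + (brk (⇑D) (TwoBKP.negPart x) (brk (⇑D) (TwoBKP.negPart y) (TwoBKP.negPart z))
        + brk (⇑D) (TwoBKP.negPart x) (brk (⇑D) (TwoBKP.negPart y) (TwoBKP.negPart z)))) := by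
  have hP : ∀ i, max (Ny + Nz) 0 < i →
      brk (⇑D) (TwoBKP.posPart y) (TwoBKP.posPart z) i = 0 := fun i hi =>
    brk_bound D (posPart_bound hy) (posPart_bound hz) i (by omega)
  have hQ : ∀ i, max (Ny + Nz) 0 < i →
      brk (⇑D) (TwoBKP.negPart y) (TwoBKP.negPart z) i = 0 := fun i hi =>
    brk_bound D (negPart_bound hy) (negPart_bound hz) i (by omega)
  have hu : ∀ n, n < 0 →
      (brk (⇑D) (TwoBKP.posPart y) (TwoBKP.posPart z)
        + brk (⇑D) (TwoBKP.posPart y) (TwoBKP.posPart z)) n = 0 := by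
    intro n hn
    have h0 := brk_pos_supp D (posPart_supp y) (posPart_supp z) n hn
    simp [h0]
  have hv : ∀ n, 0 ≤ n →
      (-(brk (⇑D) (TwoBKP.negPart y) (TwoBKP.negPart z)
        + brk (⇑D) (TwoBKP.negPart y) (TwoBKP.negPart z))) n = 0 := by
    intro n hn
    have h0 := brk_neg_supp D (negPart_supp y) (negPart_supp z) n hn
    simp [h0]
  have Eyz : brkR (⇑D) y z =
      (brk (⇑D) (TwoBKP.posPart y) (TwoBKP.posPart z)
        + brk (⇑D) (TwoBKP.posPart y) (TwoBKP.posPart z))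
      + (-(brk (⇑D) (TwoBKP.negPart y) (TwoBKP.negPart z)
        + brk (⇑D) (TwoBKP.negPart y) (TwoBKP.negPart z))) := by
    rw [brkR_eq D hy hz, sub_eq_add_neg]
  have hyzB : ∀ i, max (Ny + Nz) 0 < i → brkR (⇑D) y z i = 0 := by
    intro i hi
    rw [Eyz]
    simp [hP i hi, hQ i hi]
  rw [brkR_eq D hx hyzB, Eyz, posPart_of_split hu hv, negPart_of_split hu hv,
    brk_add_right D (posPart_bound hx) hP hP, brk_neg_right,
    brk_add_right D (negPart_bound hx) hQ hQ]
  abel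

end TwoBKPAux

open TwoBKPAux

open TwoBKP in
theorem rMat_solves_modifiedYangBaxter {A : Type*} [CommRing A]
    (D : Derivation ℤ A A) :
    -- the modified Yang–Baxter equation
    (∀ f g : ℤ → A, IsPDO f → IsPDO g →
        brk ⇑D (rMat f) (rMat g) - rMat (brkR ⇑D f g) = - brk ⇑D f g) ∧
    -- consequently [·,·]_R is a second Lie bracket on 𝒟⁻: alternating …
    (∀ f : ℤ → A, IsPDO f → brkR ⇑D f f = 0) ∧
    -- … and satisfying the Jacobi identity
    (∀ f g h : ℤ → A, IsPDO f → IsPDO g → IsPDO h →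
        brkR ⇑D f (brkR ⇑D g h) + brkR ⇑D g (brkR ⇑D h f)
          + brkR ⇑D h (brkR ⇑D f g) = 0) := by
  refine ⟨?_, ?_, ?_⟩
  · -- modified Yang–Baxter
    intro f g hf0 hg0
    obtain ⟨Nf, hf⟩ := hf0
    obtain ⟨Ng, hg⟩ := hg0
    have hfp := posPart_bound hf
    have hfm := negPart_bound hf
    have hgp := posPart_bound hg
    have hgm := negPart_bound hg
    have e1 : brk ⇑D (rMat f) (rMat g) =
        brk ⇑D (TwoBKP.posPart f) (TwoBKP.posPart g)
          - brk ⇑D (TwoBKP.posPart f) (TwoBKP.negPart g)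
          - brk ⇑D (TwoBKP.negPart f) (TwoBKP.posPart g)
          + brk ⇑D (TwoBKP.negPart f) (TwoBKP.negPart g) :=
      brk_sub_sub D hfp hfm hgp hgm
    have e2 : brkR ⇑D f g =
        (brk ⇑D (TwoBKP.posPart f) (TwoBKP.posPart g)
          + brk ⇑D (TwoBKP.posPart f) (TwoBKP.posPart g))
        + (-(brk ⇑D (TwoBKP.negPart f) (TwoBKP.negPart g)
          + brk ⇑D (TwoBKP.negPart f) (TwoBKP.negPart g))) := by
      rw [brkR_eq D hf hg, sub_eq_add_neg]
    have hu : ∀ n, n < 0 →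
        (brk ⇑D (TwoBKP.posPart f) (TwoBKP.posPart g)
          + brk ⇑D (TwoBKP.posPart f) (TwoBKP.posPart g)) n = 0 := by
      intro n hn
      have h0 := brk_pos_supp D (posPart_supp f) (posPart_supp g) n hn
      simp [h0]
    have hv : ∀ n, 0 ≤ n →
        (-(brk ⇑D (TwoBKP.negPart f) (TwoBKP.negPart g)
          + brk ⇑D (TwoBKP.negPart f) (TwoBKP.negPart g))) n = 0 := by
      intro n hn
      have h0 := brk_neg_supp D (negPart_supp f) (negPart_supp g) n hn
      simp [h0]
    have e3 : rMat (brkR ⇑D f g) =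
        (brk ⇑D (TwoBKP.posPart f) (TwoBKP.posPart g)
          + brk ⇑D (TwoBKP.posPart f) (TwoBKP.posPart g))
        + (brk ⇑D (TwoBKP.negPart f) (TwoBKP.negPart g)
          + brk ⇑D (TwoBKP.negPart f) (TwoBKP.negPart g)) := by
      rw [e2, rMat_of_split hu hv, sub_neg_eq_add]
    have e4 : brk ⇑D f g =
        brk ⇑D (TwoBKP.posPart f) (TwoBKP.posPart g)
          + brk ⇑D (TwoBKP.posPart f) (TwoBKP.negPart g)
          + brk ⇑D (TwoBKP.negPart f) (TwoBKP.posPart g)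
          + brk ⇑D (TwoBKP.negPart f) (TwoBKP.negPart g) := by
      have h4 := brk_expand4 D hfp hfm hgp hgm
      rw [posPart_add_negPart f, posPart_add_negPart g] at h4
      exact h4
    rw [e1, e3, e4]
    abel
  · -- alternating
    intro f _
    unfold brkR brk
    abel
  · -- Jacobi
    intro f g h hf0 hg0 hh0
    obtain ⟨Nf, hf⟩ := hf0
    obtain ⟨Ng, hg⟩ := hg0
    obtain ⟨Nh, hh⟩ := hh0
    have jp := brk_jacobi D (posPart_bound hf) (posPart_bound hg) (posPart_bound hh)
    have jm := brk_jacobi D (negPart_bound hf) (negPart_bound hg) (negPart_bound hh)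
    rw [brkR_brkR D hf hg hh, brkR_brkR D hg hh hf, brkR_brkR D hh hf hg]
    linear_combination (4 : ℤ → A) * jp + (4 : ℤ → A) * jm
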